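/- Let A be a Banach algebra and B a Banach A-bimodule. Then Z^ℓ_{B**}(A**) = A** (i.e., for every a″ ∈ A** the map b″ ↦ π_ℓ***(a″, b″) is weak*–weak* continuous on B**) if and only if for every b₀′ ∈ B*, the map T_{b₀′} : B** → A*, T_{b₀′}(b″) = π_ℓ**(b″, b₀′), is continuous from B** with its weak* topology to A* with its weak topology. -/

import Mathlib

/- Common setup: Arens extensions of bounded bilinear maps between Banach spaces,
weak*–weak* continuity, and related notions. -/

namespace NormedSpace

/-- The topological dual of a seminormed space `E` (as `NormedSpace.Dual` of the older Mathlib). -/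
def Dual (𝕜 : Type*) [NontriviallyNormedField 𝕜] (E : Type*) [SeminormedAddCommGroup E]
    [NormedSpace 𝕜 E] : Type _ :=
  E →L[𝕜] 𝕜

noncomputable instance Dual.instNormedAddCommGroup (𝕜 : Type*) [NontriviallyNormedField 𝕜]
    (E : Type*) [NormedAddCommGroup E] [NormedSpace 𝕜 E] :
    NormedAddCommGroup (Dual 𝕜 E) :=
  ContinuousLinearMap.toNormedAddCommGroup

noncomputable instance Dual.instNormedSpace (𝕜 : Type*) [NontriviallyNormedField 𝕜]
    (E : Type*) [NormedAddCommGroup E] [NormedSpace 𝕜 E] :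
    NormedSpace 𝕜 (Dual 𝕜 E) :=
  ContinuousLinearMap.toNormedSpace

end NormedSpace

open NormedSpace ContinuousLinearMap Filter Topology

section ArensDefs

variable (𝕜 : Type*) [RCLike 𝕜]
variable {X Y Z : Type*}
  [NormedAddCommGroup X] [NormedSpace 𝕜 X]
  [NormedAddCommGroup Y] [NormedSpace 𝕜 Y]
  [NormedAddCommGroup Z] [NormedSpace 𝕜 Z]

/-- The first adjoint `m*` of a bounded bilinear map `m : X × Y → Z`, characterized by
`⟨m*(z′,x), y⟩ = ⟨z′, m(x,y)⟩`. -/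
noncomputable def arensS (m : X →L[𝕜] Y →L[𝕜] Z) :
    Dual 𝕜 Z →L[𝕜] X →L[𝕜] Dual 𝕜 Y :=
  ((compL 𝕜 X (Y →L[𝕜] Z) (Dual 𝕜 Y)).flip m).comp (compL 𝕜 Y Z 𝕜)

/-- The second adjoint `m**`, characterized by `⟨m**(y″,z′), x⟩ = ⟨y″, m*(z′,x)⟩`. -/
noncomputable def arensSS (m : X →L[𝕜] Y →L[𝕜] Z) :
    Dual 𝕜 (Dual 𝕜 Y) →L[𝕜] Dual 𝕜 Z →L[𝕜] Dual 𝕜 X :=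
  ((compL 𝕜 (Dual 𝕜 Z) (X →L[𝕜] Dual 𝕜 Y) (Dual 𝕜 X)).flip (arensS 𝕜 m)).comp
    (compL 𝕜 X (Dual 𝕜 Y) 𝕜)

/-- The Arens (triple adjoint) extension `m***` of a bounded bilinear map, characterized by
`⟨m***(x″,y″), z′⟩ = ⟨x″, m**(y″,z′)⟩`. -/
noncomputable def arensExt (m : X →L[𝕜] Y →L[𝕜] Z) :
    Dual 𝕜 (Dual 𝕜 X) →L[𝕜] Dual 𝕜 (Dual 𝕜 Y) →L[𝕜] Dual 𝕜 (Dual 𝕜 Z) :=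
  ((compL 𝕜 (Dual 𝕜 (Dual 𝕜 Y)) (Dual 𝕜 Z →L[𝕜] Dual 𝕜 X) (Dual 𝕜 (Dual 𝕜 Z))).flip
      (arensSS 𝕜 m)).comp
    (compL 𝕜 (Dual 𝕜 Z) (Dual 𝕜 X) 𝕜)

end ArensDefs

/-- A map between dual spaces is weak*–weak* continuous if it is continuous with respect to
the weak* topologies on both sides. -/
def IsWeakStarWeakStarContinuous (𝕜 : Type*) [RCLike 𝕜] {E F : Type*}
    [NormedAddCommGroup E] [NormedSpace 𝕜 E]
    [NormedAddCommGroup F] [NormedSpace 𝕜 F]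
    (T : Dual 𝕜 E → Dual 𝕜 F) : Prop :=
  Continuous fun x : WeakDual 𝕜 E =>
    (StrongDual.toWeakDual (T (WeakDual.toStrongDual x)) : WeakDual 𝕜 F)

/-- `Z^ℓ_{B**}(A**) = A**` (every `b″ ↦ π_ℓ***(a″, b″)` is weak*–weak*
continuous) iff for every `b₀′ ∈ B*` the map `T_{b₀′} : B** → A*`, `T_{b₀′}(b″) = π_ℓ**(b″, b₀′)`,
is weak*-to-weak continuous. -/
theorem leftTopologicalCenter_eq_top_iff_secondAdjoints_weakStarToWeak_continuous
    {𝕜 : Type*} [RCLike 𝕜]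
    {A : Type*} [NonUnitalNormedRing A] [NormedSpace 𝕜 A]
    [IsScalarTower 𝕜 A A] [SMulCommClass 𝕜 A A] [CompleteSpace A]
    {B : Type*} [NormedAddCommGroup B] [NormedSpace 𝕜 B] [CompleteSpace B]
    (πℓ : A →L[𝕜] B →L[𝕜] B) (πr : B →L[𝕜] A →L[𝕜] B)
    (hℓ : ∀ (a₁ a₂ : A) (b : B), πℓ (a₁ * a₂) b = πℓ a₁ (πℓ a₂ b))
    (hr : ∀ (b : B) (a₁ a₂ : A), πr b (a₁ * a₂) = πr (πr b a₁) a₂)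
    (hℓr : ∀ (a₁ : A) (b : B) (a₂ : A), πr (πℓ a₁ b) a₂ = πℓ a₁ (πr b a₂)) :
    (∀ a'' : Dual 𝕜 (Dual 𝕜 A),
        IsWeakStarWeakStarContinuous 𝕜
          (fun b'' : Dual 𝕜 (Dual 𝕜 B) => arensExt 𝕜 πℓ a'' b'')) ↔
      ∀ b₀' : Dual 𝕜 B,
        Continuous fun b'' : WeakDual 𝕜 (Dual 𝕜 B) =>
          (toWeakSpace 𝕜 (Dual 𝕜 A) (arensSS 𝕜 πℓ (WeakDual.toStrongDual b'') b₀') :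
            WeakSpace 𝕜 (Dual 𝕜 A)) := by
  have key : ∀ (a'' : Dual 𝕜 (Dual 𝕜 A)) (b₀' : Dual 𝕜 B) (b'' : Dual 𝕜 (Dual 𝕜 B)),
      DFunLike.coe (F := Dual 𝕜 B →L[𝕜] 𝕜) (arensExt 𝕜 πℓ a'' b'') b₀' =
        DFunLike.coe (F := Dual 𝕜 A →L[𝕜] 𝕜) a'' (arensSS 𝕜 πℓ b'' b₀') := fun _ _ _ => rfl
  constructor
  · intro h b₀'
    apply WeakBilin.continuous_of_continuous_eval
    intro a''
    have hc := (WeakBilin.eval_continuous _ b₀').comp (h a'')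
    exact hc
  · intro h a''
    apply WeakBilin.continuous_of_continuous_eval
    intro b₀'
    have hc := (WeakBilin.eval_continuous (topDualPairing 𝕜 (Dual 𝕜 A)).flip a'').comp (h b₀')
    exact hc
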